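/- In a k-truss G, for every vertex v, the induced subgraph on the closed neighborhood N(v) ∪ {v} has at least binomial(k+2, 2) edges. -/

import Mathlib

/-- A graph is a `k`-truss if it has no isolated vertices and every edge is
contained in at least `k` triangles. -/
def SimpleGraph.IsTruss {V : Type*} (G : SimpleGraph V) (k : ℕ) : Prop :=
  (∀ v : V, ∃ u : V, G.Adj v u) ∧
  ∀ ⦃u v : V⦄, G.Adj u v → k ≤ {w : V | G.Adj u w ∧ G.Adj v w}.ncard

lemma two_mul_choose_two (k : ℕ) : 2 * (k + 2).choose 2 = (k + 2) * (k + 1) := by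
  induction k with
  | zero => decide
  | succ n ih =>
    have : (n + 3).choose 2 = (n + 2).choose 1 + (n + 2).choose 2 := rfl
    rw [show n + 1 + 2 = n + 3 from rfl, this, Nat.choose_one_right, Nat.mul_add, ih]
    ring

theorem truss_closed_neighborhood_edges {V : Type*} [Fintype V]
    (G : SimpleGraph V) (k : ℕ) (h : G.IsTruss k) (v : V) :
    (k + 2).choose 2 ≤
      {e ∈ G.edgeSet | ∀ x ∈ e, x ∈ insert v (G.neighborSet v)}.ncard := by
  classical
  set s : Set V := insert v (G.neighborSet v) with hs
  let H : SimpleGraph V :=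
    { Adj := fun a b => G.Adj a b ∧ a ∈ s ∧ b ∈ s
      symm := ⟨by rintro a b ⟨h1, h2, h3⟩; exact ⟨h1.symm, h3, h2⟩⟩
      loopless := ⟨by rintro a ⟨h1, _⟩; exact G.irrefl h1⟩ }
  have hHadj : ∀ a b, H.Adj a b ↔ G.Adj a b ∧ a ∈ s ∧ b ∈ s := fun a b => Iff.rfl
  have hset : {e ∈ G.edgeSet | ∀ x ∈ e, x ∈ s} = H.edgeSet := by
    ext e
    induction e using Sym2.ind with
    | _ a b =>
      simp only [Set.mem_setOf_eq, SimpleGraph.mem_edgeSet, Sym2.mem_iff, hHadj]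
      constructor
      · rintro ⟨hab, hx⟩
        exact ⟨hab, hx a (Or.inl rfl), hx b (Or.inr rfl)⟩
      · rintro ⟨hab, ha, hb⟩
        refine ⟨hab, fun x hx => ?_⟩
        rcases hx with rfl | rfl
        exacts [ha, hb]
  rw [hset]
  -- ncard of a neighbor set is degree
  have hdeg : ∀ (w : V), (H.neighborSet w).ncard = H.degree w := by
    intro w
    rw [SimpleGraph.degree, SimpleGraph.neighborFinset, Set.ncard_eq_toFinset_card']
  -- v's degree in H equals its degree in G
  have hNv : H.neighborSet v = G.neighborSet v := by
    ext u
    simp only [SimpleGraph.mem_neighborSet, hHadj]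
    constructor
    · rintro ⟨h1, _⟩; exact h1
    · intro h1; exact ⟨h1, Or.inl rfl, Or.inr h1⟩
  -- v has degree ≥ k + 1 in G
  obtain ⟨u, hu⟩ := h.1 v
  have hcard_v : k + 1 ≤ (G.neighborSet v).ncard := by
    have hsub : insert u {w : V | G.Adj v w ∧ G.Adj u w} ⊆ G.neighborSet v := by
      rintro x (rfl | ⟨h1, _⟩)
      · exact hu
      · exact h1
    have hufree : u ∉ {w : V | G.Adj v w ∧ G.Adj u w} := by
      rintro ⟨_, h2⟩; exact G.irrefl h2
    calc k + 1 ≤ {w : V | G.Adj v w ∧ G.Adj u w}.ncard + 1 := by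
          have := h.2 hu; omega
      _ = (insert u {w : V | G.Adj v w ∧ G.Adj u w}).ncard := by
          rw [Set.ncard_insert_of_notMem hufree (Set.toFinite _)]
      _ ≤ (G.neighborSet v).ncard := Set.ncard_le_ncard hsub (Set.toFinite _)
  -- every neighbor w of v has degree ≥ k + 1 in H
  have hdegw : ∀ w ∈ G.neighborFinset v, k + 1 ≤ H.degree w := by
    intro w hw
    rw [SimpleGraph.mem_neighborFinset] at hw
    rw [← hdeg]
    have hsub : insert v {x : V | G.Adj v x ∧ G.Adj w x} ⊆ H.neighborSet w := by
      rintro x (rfl | ⟨h1, h2⟩)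
      · exact ⟨hw.symm, Or.inr hw, Or.inl rfl⟩
      · exact ⟨h2, Or.inr hw, Or.inr h1⟩
    have hvfree : v ∉ {x : V | G.Adj v x ∧ G.Adj w x} := by
      rintro ⟨h1, _⟩; exact G.irrefl h1
    calc k + 1 ≤ {x : V | G.Adj v x ∧ G.Adj w x}.ncard + 1 := by
          have := h.2 hw; omega
      _ = (insert v {x : V | G.Adj v x ∧ G.Adj w x}).ncard := by
          rw [Set.ncard_insert_of_notMem hvfree (Set.toFinite _)]
      _ ≤ (H.neighborSet w).ncard := Set.ncard_le_ncard hsub (Set.toFinite _)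
  -- sum of degrees
  have hsum : ∑ x : V, H.degree x = 2 * H.edgeFinset.card :=
    H.sum_degrees_eq_twice_card_edges
  have hvmem : v ∉ G.neighborFinset v := by
    simp [SimpleGraph.mem_neighborFinset]
  have hd : (G.neighborFinset v).card = (G.neighborSet v).ncard := by
    rw [SimpleGraph.neighborFinset, Set.ncard_eq_toFinset_card']
  have hlower : (k + 1) * (k + 2) ≤ ∑ x : V, H.degree x := by
    have hsub : insert v (G.neighborFinset v) ⊆ Finset.univ := Finset.subset_univ _
    have h1 : ∑ x ∈ insert v (G.neighborFinset v), H.degree x ≤ ∑ x : V, H.degree x :=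
      Finset.sum_le_sum_of_subset hsub
    rw [Finset.sum_insert hvmem] at h1
    have h2 : (G.neighborFinset v).card * (k + 1) ≤ ∑ x ∈ G.neighborFinset v, H.degree x := by
      calc (G.neighborFinset v).card * (k + 1)
          = ∑ _x ∈ G.neighborFinset v, (k + 1) := by rw [Finset.sum_const, smul_eq_mul]
        _ ≤ ∑ x ∈ G.neighborFinset v, H.degree x := Finset.sum_le_sum hdegw
    have h3 : k + 1 ≤ H.degree v := by rw [← hdeg, hNv]; exact hcard_v
    have h4 : k + 1 ≤ (G.neighborFinset v).card := by rw [hd]; exact hcard_v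
    nlinarith [h1, h2, h3, h4]
  rw [hsum] at hlower
  have h2c : 2 * (k + 2).choose 2 = (k + 1) * (k + 2) := by
    rw [two_mul_choose_two]; ring
  have hE : H.edgeSet.ncard = H.edgeFinset.card := by
    rw [SimpleGraph.edgeFinset, Set.ncard_eq_toFinset_card']
  omega
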